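/- For any finite connected simple graph G of order at least two and any finite connected simple graph H, P(G) × V(H) ⊆ P(G □ H), where G □ H is the Cartesian product and, for a graph Γ, P(Γ) is the set of vertices v for which there exist vertices u,w with N_Γ[u] ∩ N_Γ[w] = {v}. -/

import Mathlib

open SimpleGraph

/-- `X` is a total mutual-visibility set of `G`: every two vertices of `G` are `X`-visible,
i.e. joined by a shortest path whose internal vertices avoid `X`. -/
def IsTMVSet {V : Type*} (G : SimpleGraph V) (X : Set V) : Prop :=
  ∀ x y : V, ∃ p : G.Walk x y, p.length = G.dist x y ∧
    ∀ w ∈ p.support, w ≠ x → w ≠ y → w ∉ X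

/-- The total mutual-visibility number of `G`. -/
noncomputable def muT {V : Type*} (G : SimpleGraph V) : ℕ :=
  sSup {n : ℕ | ∃ X : Set V, IsTMVSet G X ∧ X.ncard = n}

/-- `D` is a dominating set of `G`. -/
def IsDomSet {V : Type*} (G : SimpleGraph V) (D : Set V) : Prop :=
  ∀ v : V, v ∉ D → ∃ u ∈ D, G.Adj u v

/-- The domination number of `G`. -/
noncomputable def gammaDom {V : Type*} (G : SimpleGraph V) : ℕ :=
  sInf {n : ℕ | ∃ D : Set V, IsDomSet G D ∧ D.ncard = n}

/-- `D` is a connected dominating set of `G`. -/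
def IsConnDomSet {V : Type*} (G : SimpleGraph V) (D : Set V) : Prop :=
  IsDomSet G D ∧ (G.induce D).Connected

/-- The connected domination number of `G`. -/
noncomputable def gammaConnDom {V : Type*} (G : SimpleGraph V) : ℕ :=
  sInf {n : ℕ | ∃ D : Set V, IsConnDomSet G D ∧ D.ncard = n}

/-- The closed neighborhood of a vertex. -/
def closedNbhd {V : Type*} (G : SimpleGraph V) (v : V) : Set V :=
  insert v (G.neighborSet v)

/-- The set of simplicial vertices of `G`. -/
def simpSet {V : Type*} (G : SimpleGraph V) : Set V :=
  {v | G.IsClique (G.neighborSet v)}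

/-- The set `P(G)` of vertices that appear as the unique common closed neighbor of
two vertices. -/
def pSet {V : Type*} (G : SimpleGraph V) : Set V :=
  {v | ∃ u w : V, closedNbhd G u ∩ closedNbhd G w = {v}}

/-- The set `C(G)` of vertices belonging to every maximum total mutual-visibility set. -/
def compulsorySet {V : Type*} (G : SimpleGraph V) : Set V :=
  {v | ∀ X : Set V, IsTMVSet G X → X.ncard = muT G → v ∈ X}

/-- The set `F(G)` of vertices belonging to no maximum total mutual-visibility set. -/
def forbiddenSet {V : Type*} (G : SimpleGraph V) : Set V :=
  {v | ∀ X : Set V, IsTMVSet G X → X.ncard = muT G → v ∉ X}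

/-- The independent total mutual-visibility number of `G`. -/
noncomputable def muIT {V : Type*} (G : SimpleGraph V) : ℕ :=
  sSup {n : ℕ | ∃ X : Set V, IsTMVSet G X ∧ (∀ u ∈ X, ∀ v ∈ X, ¬ G.Adj u v) ∧ X.ncard = n}

/-- The join `G + H` of two graphs. -/
def joinGraph {V W : Type*} (G : SimpleGraph V) (H : SimpleGraph W) :
    SimpleGraph (V ⊕ W) :=
  SimpleGraph.fromRel (fun x y =>
    (∃ a b, x = Sum.inl a ∧ y = Sum.inl b ∧ G.Adj a b) ∨
    (∃ a b, x = Sum.inr a ∧ y = Sum.inr b ∧ H.Adj a b) ∨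
    (∃ a b, x = Sum.inl a ∧ y = Sum.inr b))

/-- The corona product `G ⊙ H`: a copy of `G` together with a copy `Hᵢ` of `H` for each
vertex `uᵢ` of `G`, where `uᵢ` is joined to all vertices of `Hᵢ`. -/
def coronaProd {V W : Type*} (G : SimpleGraph V) (H : SimpleGraph W) :
    SimpleGraph (V ⊕ V × W) :=
  SimpleGraph.fromRel (fun x y =>
    (∃ a b, x = Sum.inl a ∧ y = Sum.inl b ∧ G.Adj a b) ∨
    (∃ i w w', x = Sum.inr (i, w) ∧ y = Sum.inr (i, w') ∧ H.Adj w w') ∨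
    (∃ i w, x = Sum.inl i ∧ y = Sum.inr (i, w)))

/-- The lexicographic product `G ∘ H`. -/
def lexProd {V W : Type*} (G : SimpleGraph V) (H : SimpleGraph W) :
    SimpleGraph (V × W) where
  Adj x y := G.Adj x.1 y.1 ∨ (x.1 = y.1 ∧ H.Adj x.2 y.2)
  symm := ⟨fun x y h => by
    rcases h with h | ⟨h1, h2⟩
    · exact Or.inl h.symm
    · exact Or.inr ⟨h1.symm, h2.symm⟩⟩
  loopless := ⟨fun x h => by
    rcases h with h | ⟨_, h⟩
    · exact G.loopless.irrefl _ h
    · exact H.loopless.irrefl _ h⟩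

/-- `B` induces a 2-connected subgraph of `G`. -/
def IsTwoConnSet {V : Type*} (G : SimpleGraph V) (B : Set V) : Prop :=
  3 ≤ B.ncard ∧ (G.induce B).Connected ∧ ∀ v ∈ B, (G.induce (B \ {v})).Connected

/-- `P(G) × V(H) ⊆ P(G □ H)`. -/
theorem pSet_prod_subset_pSet_boxProd {V W : Type*} [Fintype V] [Fintype W]
    (G : SimpleGraph V) (H : SimpleGraph W) (hG : G.Connected) (hH : H.Connected)
    (hn : 2 ≤ Fintype.card V) :
    pSet G ×ˢ (Set.univ : Set W) ⊆ pSet (G □ H) := by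
  rintro ⟨g, h⟩ ⟨⟨u, w, huw⟩, -⟩
  have hg : g ∈ closedNbhd G u ∩ closedNbhd G w := by rw [huw]; rfl
  have hmem : ∀ v, v ∈ closedNbhd G u → v ∈ closedNbhd G w → v = g := by
    intro v h1 h2
    have : v ∈ ({g} : Set V) := huw ▸ ⟨h1, h2⟩
    exact this
  have hune : u ≠ w := by
    intro he; subst he
    have hu : u ∈ closedNbhd G u := Set.mem_insert _ _
    have hug : u = g := hmem u hu hu
    subst hug
    obtain ⟨v, hv⟩ : ∃ v : V, v ≠ u := Fintype.exists_ne_of_one_lt_card hn u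
    obtain ⟨p⟩ := hG.preconnected u v
    cases p with
    | nil => exact hv rfl
    | cons ha q =>
      rename_i x
      have hx : x ∈ closedNbhd G u := Set.mem_insert_of_mem _ ha
      exact G.ne_of_adj ha (hmem x hx hx).symm
  refine ⟨(u, h), (w, h), ?_⟩
  ext ⟨a, b⟩
  simp only [Set.mem_inter_iff, closedNbhd, Set.mem_insert_iff, SimpleGraph.mem_neighborSet,
    SimpleGraph.boxProd_adj, Prod.mk.injEq, Set.mem_singleton_iff]
  constructor
  · rintro ⟨h1, h2⟩
    have key : ∀ x : V, (a = x ∧ b = h ∨ (G.Adj x a ∧ h = b ∨ H.Adj h b ∧ x = a)) →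
        (a ∈ closedNbhd G x ∧ b = h) ∨ (a = x ∧ H.Adj h b) := by
      rintro x (⟨rfl, rfl⟩ | (⟨hadj, rfl⟩ | ⟨hadj, rfl⟩))
      · exact Or.inl ⟨Set.mem_insert _ _, rfl⟩
      · exact Or.inl ⟨Set.mem_insert_of_mem _ hadj, rfl⟩
      · exact Or.inr ⟨rfl, hadj⟩
    rcases key u h1 with ⟨hcu, rfl⟩ | ⟨rfl, hadj⟩
    · rcases key w h2 with ⟨hcw, -⟩ | ⟨-, hadj⟩
      · exact ⟨hmem a hcu hcw, rfl⟩
      · exact absurd hadj (H.irrefl)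
    · rcases key w h2 with ⟨hcw, rfl⟩ | ⟨rfl, -⟩
      · exact absurd hadj (H.irrefl)
      · exact absurd rfl hune
  · rintro ⟨rfl, rfl⟩
    rcases hg with ⟨hgu, hgw⟩
    constructor
    · rcases hgu with rfl | hadj
      · exact Or.inl ⟨rfl, rfl⟩
      · exact Or.inr (Or.inl ⟨hadj, rfl⟩)
    · rcases hgw with rfl | hadj
      · exact Or.inl ⟨rfl, rfl⟩
      · exact Or.inr (Or.inl ⟨hadj, rfl⟩)
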